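/- Let f : ℝ → ℝ be a nondecreasing function and let X and Y be real-valued random variables (possibly on different probability spaces) with cumulative distribution functions F_X and F_Y. Then for every δ ≥ 0 and every t ∈ ℝ, P( f(X) > t ) − P( f(Y + δ) > t ) ≤ L_δ(F_X, F_Y). -/

import Mathlib

open Filter MeasureTheory Set

/-- A cumulative distribution function on ℝ: nondecreasing, right-continuous,
with limit 0 at -∞ and 1 at +∞. -/
def IsCDF (F : ℝ → ℝ) : Prop :=
  Monotone F ∧ (∀ t : ℝ, ContinuousWithinAt F (Set.Ici t) t) ∧
    Tendsto F atBot (nhds 0) ∧ Tendsto F atTop (nhds 1)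

/-- The Lévy gauge with tolerance `δ` between two cdfs. -/
noncomputable def levyGauge (δ : ℝ) (F G : ℝ → ℝ) : ℝ :=
  sInf {ε : ℝ | 0 ≤ ε ∧ ∀ t : ℝ, F (t - δ) - ε ≤ G t ∧ G t ≤ F (t + δ) + ε}

/-- The cumulative distribution function of a real random variable `X` under `P`. -/
noncomputable def rvCdf {Ω : Type*} [MeasurableSpace Ω] (P : MeasureTheory.Measure Ω)
    (X : Ω → ℝ) (t : ℝ) : ℝ :=
  (P {ω | X ω ≤ t}).toReal

lemma toReal_prob_le_one {Ω : Type*} [MeasurableSpace Ω] (P : Measure Ω)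
    [IsProbabilityMeasure P] (A : Set Ω) : (P A).toReal ≤ 1 := by
  simpa using ENNReal.toReal_mono (by simp) (prob_le_one (μ := P) (s := A))

/-- Key lemma: for a lower measurable set `B` and `ε` with
`G u ≤ F (u + δ) + ε` for all `u`, we have `P₂(Y + δ ∈ B) ≤ P₁(X ∈ B) + ε`. -/
lemma key_lower_set {Ω₁ Ω₂ : Type*} [MeasurableSpace Ω₁] [MeasurableSpace Ω₂]
    (P₁ : Measure Ω₁) (P₂ : Measure Ω₂)
    [IsProbabilityMeasure P₁] [IsProbabilityMeasure P₂]
    (X : Ω₁ → ℝ) (Y : Ω₂ → ℝ) (hX : Measurable X) (hY : Measurable Y)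
    (B : Set ℝ) (hB : IsLowerSet B) (δ ε : ℝ) (hδ : 0 ≤ δ) (hε0 : 0 ≤ ε)
    (h : ∀ u : ℝ, rvCdf P₂ Y u ≤ rvCdf P₁ X (u + δ) + ε) :
    (P₂ {ω | Y ω + δ ∈ B}).toReal ≤ (P₁ {ω | X ω ∈ B}).toReal + ε := by
  rcases B.eq_empty_or_nonempty with hBe | hBne
  · simp [hBe]
    positivity
  rcases eq_or_ne B Set.univ with hBu | hBu
  · have h1 : (P₂ {ω | Y ω + δ ∈ B}).toReal = 1 := by simp [hBu]
    have h2 : (P₁ {ω | X ω ∈ B}).toReal = 1 := by simp [hBu]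
    rw [h1, h2]; linarith
  -- B is nonempty and not univ; it is bounded above
  obtain ⟨c, hc⟩ : ∃ c, c ∉ B := by
    by_contra hcon
    push_neg at hcon
    exact hBu (Set.eq_univ_of_forall hcon)
  have hbdd : BddAbove B := ⟨c, fun x hx => by
    by_contra hlt
    exact hc (hB (le_of_not_ge hlt) hx)⟩
  set b := sSup B with hb
  have hsubIic : B ⊆ Set.Iic b := fun x hx => le_csSup hbdd hx
  have hIio : Set.Iio b ⊆ B := by
    intro x hx
    obtain ⟨y, hyB, hxy⟩ := exists_lt_of_lt_csSup hBne hx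
    exact hB hxy.le hyB
  by_cases hbB : b ∈ B
  · -- B = Iic b
    have hBeq : B = Set.Iic b := Set.Subset.antisymm hsubIic (fun x hx => hB hx hbB)
    have h1 : {ω | Y ω + δ ∈ B} = {ω | Y ω ≤ b - δ} := by
      ext ω; simp [hBeq]; constructor <;> intro <;> linarith
    have h2 : {ω | X ω ∈ B} = {ω | X ω ≤ b} := by ext ω; simp [hBeq]
    rw [h1, h2]
    have := h (b - δ)
    simp only [rvCdf] at this
    rw [sub_add_cancel] at this
    exact this
  · -- B = Iio b
    have hBeq : B = Set.Iio b := Set.Subset.antisymm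
      (fun x hx => lt_of_le_of_ne (hsubIic hx) (fun he : x = b => hbB (he ▸ hx))) hIio
    set c := b - δ with hcdef
    have h1 : {ω | Y ω + δ ∈ B} = {ω | Y ω < c} := by
      ext ω; simp [hBeq, hcdef]; constructor <;> intro <;> linarith
    rw [h1]
    -- express {Y < c} as an increasing union
    set s : ℕ → Set Ω₂ := fun n => {ω | Y ω ≤ c - 1 / (n + 1)} with hs
    have hmono : Monotone s := by
      intro m n hmn ω hω
      simp only [hs, Set.mem_setOf_eq] at *
      have : (1 : ℝ) / (n + 1) ≤ 1 / (m + 1) := by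
        apply one_div_le_one_div_of_le <;> [positivity; exact_mod_cast by omega]
      linarith
    have hunion : (⋃ n, s n) = {ω | Y ω < c} := by
      ext ω
      simp only [hs, Set.mem_iUnion, Set.mem_setOf_eq]
      constructor
      · rintro ⟨n, hn⟩
        have : (0 : ℝ) < 1 / (n + 1) := by positivity
        linarith
      · intro hω
        obtain ⟨n, hn⟩ := exists_nat_one_div_lt (sub_pos.mpr hω)
        exact ⟨n, by linarith⟩
    have hlim : Tendsto (fun n => (P₂ (s n)).toReal) atTop
        (nhds ((P₂ {ω | Y ω < c}).toReal)) := by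
      have := MeasureTheory.tendsto_measure_iUnion_atTop (μ := P₂) hmono
      rw [hunion] at this
      exact (ENNReal.tendsto_toReal (measure_ne_top _ _)).comp this
    refine le_of_tendsto' hlim (fun n => ?_)
    have hterm : (P₂ (s n)).toReal ≤ rvCdf P₁ X (c - 1 / (n + 1) + δ) + ε :=
      h (c - 1 / (n + 1))
    have hlt : c - 1 / (n + 1) + δ < b := by
      have : (0 : ℝ) < 1 / ((n : ℝ) + 1) := by positivity
      simp only [hcdef]; linarith
    have hsub : {ω | X ω ≤ c - 1 / (n + 1) + δ} ⊆ {ω | X ω ∈ B} := by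
      intro ω hω
      simp only [Set.mem_setOf_eq, hBeq, Set.mem_Iio] at *
      linarith
    have hmeas : (P₁ {ω | X ω ≤ c - 1 / (n + 1) + δ}).toReal ≤
        (P₁ {ω | X ω ∈ B}).toReal :=
      ENNReal.toReal_mono (measure_ne_top _ _) (measure_mono hsub)
    calc (P₂ (s n)).toReal ≤ rvCdf P₁ X (c - 1 / (n + 1) + δ) + ε := hterm
      _ ≤ (P₁ {ω | X ω ∈ B}).toReal + ε := by
          simp only [rvCdf]; linarith

/-- For nondecreasing `f` and random variables `X`, `Y` (possibly on different spaces),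
`P(f(X) > t) - P(f(Y + δ) > t) ≤ L_δ(F_X, F_Y)`. -/
theorem prob_diff_le_levyGauge {Ω₁ Ω₂ : Type*} [MeasurableSpace Ω₁] [MeasurableSpace Ω₂]
    (P₁ : Measure Ω₁) (P₂ : Measure Ω₂)
    [IsProbabilityMeasure P₁] [IsProbabilityMeasure P₂]
    (X : Ω₁ → ℝ) (Y : Ω₂ → ℝ) (hX : Measurable X) (hY : Measurable Y)
    (f : ℝ → ℝ) (hf : Monotone f) (δ : ℝ) (hδ : 0 ≤ δ) (t : ℝ) :
    (P₁ {ω | t < f (X ω)}).toReal - (P₂ {ω | t < f (Y ω + δ)}).toReal ≤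
      levyGauge δ (rvCdf P₁ X) (rvCdf P₂ Y) := by
  have hf_meas : Measurable f := hf.measurable
  apply le_csInf
  · refine ⟨1, zero_le_one, fun u => ⟨?_, ?_⟩⟩
    · have : (P₁ {ω | X ω ≤ u - δ}).toReal ≤ 1 := toReal_prob_le_one P₁ _
      have h0 : (0:ℝ) ≤ (P₂ {ω | Y ω ≤ u}).toReal := ENNReal.toReal_nonneg
      simp only [rvCdf]; linarith
    · have : (P₂ {ω | Y ω ≤ u}).toReal ≤ 1 := toReal_prob_le_one P₂ _
      have h0 : (0:ℝ) ≤ (P₁ {ω | X ω ≤ u + δ}).toReal := ENNReal.toReal_nonneg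
      simp only [rvCdf]; linarith
  · rintro ε ⟨hε0, hε⟩
    -- pass to complements
    set B : Set ℝ := {x | f x ≤ t} with hBdef
    have hB : IsLowerSet B := fun x y hyx hx => le_trans (hf hyx) hx
    have hBm : MeasurableSet B := measurableSet_le hf_meas measurable_const
    have hA₁ : {ω | t < f (X ω)} = {ω | X ω ∈ B}ᶜ := by
      ext ω; simp [hBdef, not_le]
    have hA₂ : {ω | t < f (Y ω + δ)} = {ω | Y ω + δ ∈ B}ᶜ := by
      ext ω; simp [hBdef, not_le]
    have hm₁ : MeasurableSet {ω | X ω ∈ B} := hX hBm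
    have hm₂ : MeasurableSet {ω | Y ω + δ ∈ B} := (hY.add_const δ) hBm
    have hc₁ : (P₁ {ω | t < f (X ω)}).toReal = 1 - (P₁ {ω | X ω ∈ B}).toReal := by
      rw [hA₁, prob_compl_eq_one_sub hm₁, ENNReal.toReal_sub_of_le prob_le_one (by simp)]
      simp
    have hc₂ : (P₂ {ω | t < f (Y ω + δ)}).toReal = 1 - (P₂ {ω | Y ω + δ ∈ B}).toReal := by
      rw [hA₂, prob_compl_eq_one_sub hm₂, ENNReal.toReal_sub_of_le prob_le_one (by simp)]
      simp
    rw [hc₁, hc₂]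
    have := key_lower_set P₁ P₂ X Y hX hY B hB δ ε hδ hε0 (fun u => (hε u).2)
    linarith
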